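/- Let G be a graph and t ≥ 1 an integer. There exists a doubly nonnegative matrix X ∈ DNN^{|V(G)|} with ⌈X_{uu}⌉ = t for all u, X_{uv} = 0 for all edges {u,v} of G, and X − J ⪰ 0, if and only if there exists X ∈ DNN^{|V(G)|t+1} (indexed by {0} ∪ V(G)×[t]) satisfying X_{0,0} = 1, Σᵢ X_{0,ui} = 1 for all u, Σ_{i,j} X_{ui,uj} = 1 for all u, X_{ui,vi} = 0 for all i and edges {u,v}, and X_{ui,uj} = 0 for all i ≠ j and all u. -/

import Mathlib

open Matrix

def DoublyNonneg {V : Type*} [Fintype V] (A : Matrix V V ℝ) : Prop :=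
  A.PosSemidef ∧ ∀ i j, 0 ≤ A i j

section helpers
variable {n : Type*} [Fintype n]

lemma quad_nonneg {M : Matrix n n ℝ} (h : M.PosSemidef) (x : n → ℝ) :
    0 ≤ ∑ u, ∑ v, x u * M u v * x v := by
  have := h.dotProduct_mulVec_nonneg x
  simpa [dotProduct, mulVec, Finset.mul_sum, mul_assoc] using this

lemma psd_of_quad {M : Matrix n n ℝ} (hsym : ∀ i j, M i j = M j i)
    (h : ∀ x : n → ℝ, 0 ≤ ∑ u, ∑ v, x u * M u v * x v) : M.PosSemidef := by
  refine PosSemidef.of_dotProduct_mulVec_nonneg ?_ fun x => ?_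
  · ext i j; simp [conjTranspose_apply, hsym i j]
  · have := h x
    simpa [dotProduct, mulVec, Finset.mul_sum, mul_assoc] using this

lemma quad_pair [DecidableEq n] {M : Matrix n n ℝ} (hM : M.PosSemidef) (u v : n) (a b : ℝ) :
    0 ≤ a*a*M u u + a*b*M u v + b*a*M v u + b*b*M v v := by
  have := hM.dotProduct_mulVec_nonneg (Pi.single u a + Pi.single v b)
  simp only [star_trivial, mulVec_add, dotProduct_add, add_dotProduct,
    mulVec_single, dotProduct_single, single_dotProduct] at this
  simp only [Pi.smul_apply, col_apply, op_smul_eq_mul, smul_eq_mul] at this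
  linarith [this]

lemma quadOpt {V : Type*} [Fintype V] {t : ℕ} (M : Matrix (Option (V × Fin t)) (Option (V × Fin t)) ℝ)
    (x : Option (V × Fin t) → ℝ) :
    ∑ p, ∑ q, x p * M p q * x q
    = x none * M none none * x none
    + (∑ u, ∑ i, x none * M none (some (u,i)) * x (some (u,i)))
    + (∑ u, ∑ i, x (some (u,i)) * M (some (u,i)) none * x none)
    + ∑ u, ∑ i, ∑ v, ∑ j, x (some (u,i)) * M (some (u,i)) (some (v,j)) * x (some (v,j)) := by
  rw [Fintype.sum_option]
  simp only [Fintype.sum_option, Fintype.sum_prod_type, Finset.sum_add_distrib]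
  ring

lemma double_pull (c : ℝ) (a b : n → ℝ) :
    ∑ i, ∑ j, c * (a i * b j) = c * ((∑ i, a i) * (∑ j, b j)) := by
  rw [Finset.sum_mul_sum, Finset.mul_sum]
  exact Finset.sum_congr rfl fun i _ => by rw [Finset.mul_sum]

end helpers

noncomputable def liftG {V : Type*} (t : ℕ) (s : ℝ) : Option (V × Fin t) → ℝ
  | none => 1
  | some _ => 1/s

noncomputable def liftH {V : Type*} (t : ℕ) (s : ℝ) (D : Matrix V V ℝ) :
    Option (V × Fin t) → Option (V × Fin t) → ℝ
  | some pu, some qv => D pu.1 qv.1 * ((if pu.2 = qv.2 then (1:ℝ) else 0) - 1/s)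
  | _, _ => 0

@[simp] lemma liftG_none {V : Type*} (t : ℕ) (s : ℝ) : liftG (V := V) t s none = 1 := rfl
@[simp] lemma liftG_some {V : Type*} (t : ℕ) (s : ℝ) (a : V × Fin t) :
    liftG t s (some a) = 1/s := rfl
@[simp] lemma liftH_none_left {V : Type*} (t : ℕ) (s : ℝ) (D : Matrix V V ℝ)
    (q : Option (V × Fin t)) : liftH t s D none q = 0 := by cases q <;> rfl
@[simp] lemma liftH_none_right {V : Type*} (t : ℕ) (s : ℝ) (D : Matrix V V ℝ)
    (p : Option (V × Fin t)) : liftH t s D p none = 0 := by cases p <;> rfl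
@[simp] lemma liftH_some_some {V : Type*} (t : ℕ) (s : ℝ) (D : Matrix V V ℝ)
    (pu qv : V × Fin t) :
    liftH t s D (some pu) (some qv) = D pu.1 qv.1 * ((if pu.2 = qv.2 then (1:ℝ) else 0) - 1/s) := rfl

lemma quadH_eq {V : Type*} [Fintype V] [DecidableEq V] {t : ℕ} (s : ℝ)
    (hst : s = (t : ℝ)) (hs0 : s ≠ 0) (D : Matrix V V ℝ) (x : Option (V × Fin t) → ℝ) :
    ∑ u, ∑ i, ∑ v, ∑ j, x (some (u,i)) * (D u v * ((if i = j then (1:ℝ) else 0) - 1/s)) * x (some (v,j))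
    = ∑ j : Fin t, ∑ u, ∑ v,
        (x (some (u,j)) - (∑ i, x (some (u,i)))/s) * D u v *
        (x (some (v,j)) - (∑ i, x (some (v,i)))/s) := by
  have mid : ∀ u v : V,
      (∑ i, ∑ j, x (some (u,i)) * (D u v * ((if i = j then (1:ℝ) else 0) - 1/s)) * x (some (v,j)))
      = D u v * ((∑ j, x (some (u,j)) * x (some (v,j)))
          - (∑ i, x (some (u,i))) * (∑ i, x (some (v,i))) / s) := by
    intro u v
    calc ∑ i, ∑ j, x (some (u,i)) * (D u v * ((if i = j then (1:ℝ) else 0) - 1/s)) * x (some (v,j))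
        = ∑ i, ∑ j, ((if i = j then D u v * (x (some (u,i)) * x (some (v,j))) else 0)
            - D u v / s * (x (some (u,i)) * x (some (v,j)))) := by
          refine Finset.sum_congr rfl fun i _ => Finset.sum_congr rfl fun j _ => ?_
          split_ifs with h <;> ring
      _ = (∑ i, ∑ j, (if i = j then D u v * (x (some (u,i)) * x (some (v,j))) else 0))
            - ∑ i, ∑ j, D u v / s * (x (some (u,i)) * x (some (v,j))) := by
          simp only [Finset.sum_sub_distrib]
      _ = (∑ i, D u v * (x (some (u,i)) * x (some (v,i))))
            - D u v / s * ((∑ i, x (some (u,i))) * (∑ i, x (some (v,i)))) := by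
          congr 1
          · exact Finset.sum_congr rfl fun i _ => by simp [Finset.sum_ite_eq]
          · exact double_pull _ _ _
      _ = D u v * ((∑ j, x (some (u,j)) * x (some (v,j)))
            - (∑ i, x (some (u,i))) * (∑ i, x (some (v,i))) / s) := by
          rw [show (∑ i, D u v * (x (some (u,i)) * x (some (v,i))))
              = D u v * ∑ j, x (some (u,j)) * x (some (v,j)) from (Finset.mul_sum _ _ _).symm]
          ring
  have midR : ∀ u v : V,
      (∑ j : Fin t, (x (some (u,j)) - (∑ i, x (some (u,i)))/s) * D u v *
        (x (some (v,j)) - (∑ i, x (some (v,i)))/s))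
      = D u v * ((∑ j, x (some (u,j)) * x (some (v,j)))
          - (∑ i, x (some (u,i))) * (∑ i, x (some (v,i))) / s) := by
    intro u v
    set Zu : ℝ := ∑ i, x (some (u,i)) with hZu
    set Zv : ℝ := ∑ i, x (some (v,i)) with hZv
    calc ∑ j : Fin t, (x (some (u,j)) - Zu/s) * D u v * (x (some (v,j)) - Zv/s)
        = ∑ j : Fin t, (D u v * (x (some (u,j)) * x (some (v,j)))
            - (D u v / s * Zv) * x (some (u,j)) - (D u v / s * Zu) * x (some (v,j))
            + D u v * Zu * Zv / (s * s)) := by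
          refine Finset.sum_congr rfl fun j _ => by ring
      _ = (∑ j, D u v * (x (some (u,j)) * x (some (v,j))))
            - (D u v / s * Zv) * Zu - (D u v / s * Zu) * Zv
            + (t : ℝ) * (D u v * Zu * Zv / (s * s)) := by
          simp only [Finset.sum_add_distrib, Finset.sum_sub_distrib]
          rw [← Finset.mul_sum, ← Finset.mul_sum, ← Finset.mul_sum,
            Finset.sum_const, Finset.card_univ, Fintype.card_fin, nsmul_eq_mul, ← hZu, ← hZv]
      _ = D u v * ((∑ j, x (some (u,j)) * x (some (v,j))) - Zu * Zv / s) := by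
          rw [← hst, show (∑ j, D u v * (x (some (u,j)) * x (some (v,j))))
              = D u v * ∑ j, x (some (u,j)) * x (some (v,j)) from (Finset.mul_sum _ _ _).symm]
          field_simp
          ring
  calc ∑ u, ∑ i, ∑ v, ∑ j, x (some (u,i)) * (D u v * ((if i = j then (1:ℝ) else 0) - 1/s)) * x (some (v,j))
      = ∑ u, ∑ v, ∑ i, ∑ j, x (some (u,i)) * (D u v * ((if i = j then (1:ℝ) else 0) - 1/s)) * x (some (v,j)) :=
        Finset.sum_congr rfl fun u _ => Finset.sum_comm
    _ = ∑ u, ∑ v, D u v * ((∑ j, x (some (u,j)) * x (some (v,j)))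
          - (∑ i, x (some (u,i))) * (∑ i, x (some (v,i))) / s) :=
        Finset.sum_congr rfl fun u _ => Finset.sum_congr rfl fun v _ => mid u v
    _ = ∑ u, ∑ v, ∑ j : Fin t, (x (some (u,j)) - (∑ i, x (some (u,i)))/s) * D u v *
          (x (some (v,j)) - (∑ i, x (some (v,i)))/s) :=
        Finset.sum_congr rfl fun u _ => Finset.sum_congr rfl fun v _ => (midR u v).symm
    _ = ∑ u, ∑ j : Fin t, ∑ v, (x (some (u,j)) - (∑ i, x (some (u,i)))/s) * D u v *
          (x (some (v,j)) - (∑ i, x (some (v,i)))/s) :=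
        Finset.sum_congr rfl fun u _ => Finset.sum_comm
    _ = ∑ j : Fin t, ∑ u, ∑ v, (x (some (u,j)) - (∑ i, x (some (u,i)))/s) * D u v *
          (x (some (v,j)) - (∑ i, x (some (v,i)))/s) := Finset.sum_comm

private lemma forward_dir {V : Type*} [Fintype V] [DecidableEq V]
    (G : SimpleGraph V) (t : ℕ) (ht : 1 ≤ t)
    (X : Matrix V V ℝ) (hX : DoublyNonneg X) (hceil : ∀ u, ⌈X u u⌉ = (t : ℤ))
    (hedge : ∀ u v, G.Adj u v → X u v = 0)
    (hXJ : (X - Matrix.of fun _ _ => (1 : ℝ)).PosSemidef) :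
    (∃ Y : Matrix (Option (V × Fin t)) (Option (V × Fin t)) ℝ, DoublyNonneg Y ∧
        Y none none = 1 ∧
        (∀ u : V, ∑ i : Fin t, Y none (some (u, i)) = 1) ∧
        (∀ u : V, ∑ i : Fin t, ∑ j : Fin t, Y (some (u, i)) (some (u, j)) = 1) ∧
        (∀ (i : Fin t) (u v : V), G.Adj u v → Y (some (u, i)) (some (v, i)) = 0) ∧
        (∀ (u : V) (i j : Fin t), i ≠ j → Y (some (u, i)) (some (u, j)) = 0)) := by
  have hsubJ : ∀ (M : Matrix V V ℝ) (u v : V),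
      ((M - Matrix.of fun _ _ => (1:ℝ)) : Matrix V V ℝ) u v = M u v - 1 := by
    intro M u v; simp [Matrix.sub_apply]
  have hXle : ∀ u, X u u ≤ (t : ℝ) := by
    intro u
    have h := Int.ceil_le.mp (le_of_eq (hceil u))
    exact_mod_cast h
  have hXsym : ∀ u v, X u v = X v u := fun u v =>
    ((star_trivial _).symm.trans (hX.1.1.apply v u))
  rcases eq_or_lt_of_le ht with h1 | h2
  · -- t = 1 : X is forced to be the all-ones matrix
    have ht1 : t = 1 := h1.symm
    subst ht1
    have hdiag0 : ∀ u, X u u = 1 := by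
      intro u
      have h1 := quad_pair hXJ u u 1 0
      simp only [hsubJ] at h1
      have h2 := hXle u
      push_cast at h2
      nlinarith [h1, h2]
    have hall : ∀ u v, X u v = 1 := by
      intro u v
      have hp := quad_pair hXJ u v 1 1
      have hm := quad_pair hXJ u v 1 (-1)
      simp only [hsubJ] at hp hm
      rw [hdiag0 u, hdiag0 v, hXsym v u] at hp hm
      nlinarith [hp, hm]
    refine ⟨Matrix.of fun _ _ => (1:ℝ), ⟨?_, fun p q => by norm_num⟩, rfl, ?_, ?_, ?_, ?_⟩
    · refine psd_of_quad (fun p q => rfl) fun x => ?_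
      have : ∑ p, ∑ q, x p * (Matrix.of fun _ _ => (1:ℝ)) p q * x q
          = (∑ p, x p) * (∑ q, x q) := by
        rw [Finset.sum_mul_sum]
        exact Finset.sum_congr rfl fun p _ => Finset.sum_congr rfl fun q _ => by
          simp [Matrix.of_apply]
      rw [this]
      exact mul_self_nonneg _
    · intro u; simp
    · intro u; simp
    · intro i u v hadj
      exact absurd ((hall u v).symm.trans (hedge u v hadj)) (by norm_num)
    · intro u i j hij
      exact absurd (Subsingleton.elim i j) hij
  · -- 2 ≤ t
    set s : ℝ := (t : ℝ) with hs
    have hs2 : (2:ℝ) ≤ s := by rw [hs]; exact_mod_cast h2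
    have hs0 : s ≠ 0 := by linarith
    have hs1 : s - 1 ≠ 0 := by intro h; linarith [sub_eq_zero.mp h]
    have hs1' : (0:ℝ) < s - 1 := by linarith
    have hspos : (0:ℝ) < s := by linarith
    -- normalize the diagonal of X to s
    set d : V → ℝ := fun u => s - X u u with hd
    have hd0 : ∀ u, 0 ≤ d u := fun u => by
      have := hXle u; rw [hd]; simp only; rw [hs]; linarith
    set X' : Matrix V V ℝ := X + Matrix.diagonal d with hX'
    have hX'app : ∀ u v, X' u v = X u v + if u = v then d u else 0 := by
      intro u v; rw [hX']; simp [Matrix.add_apply, Matrix.diagonal_apply]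
    have hX'diag : ∀ u, X' u u = s := by
      intro u; rw [hX'app]; simp [hd]
    have hX'psd : X'.PosSemidef := by
      rw [hX']
      exact hX.1.add (PosSemidef.diagonal (fun u => hd0 u))
    have hX'sym : ∀ u v, X' u v = X' v u :=
      fun u v => ((star_trivial _).symm.trans (hX'psd.1.apply v u))
    have hX'nn : ∀ u v, 0 ≤ X' u v := by
      intro u v
      rw [hX'app]
      rcases eq_or_ne u v with h | h
      · subst h; simp [hd]
        have := hXle u; rw [hs]; linarith [hX.2 u u]
      · simp [h]; exact hX.2 u v
    have hX'le : ∀ u v, X' u v ≤ s := by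
      intro u v
      rcases eq_or_ne u v with h | h
      · subst h; rw [hX'diag]
      · have hq := quad_pair hX'psd u v 1 (-1)
        rw [hX'diag u, hX'diag v, hX'sym v u] at hq
        nlinarith [hq]
    have hX'edge : ∀ u v, G.Adj u v → X' u v = 0 := by
      intro u v hadj
      rw [hX'app]
      simp [hadj.ne, hedge u v hadj]
    have hX'J : ((X' - Matrix.of fun _ _ => (1:ℝ)) : Matrix V V ℝ).PosSemidef := by
      have heq : ((X' - Matrix.of fun _ _ => (1:ℝ)) : Matrix V V ℝ)
          = (X - Matrix.of fun _ _ => (1:ℝ)) + Matrix.diagonal d := by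
        ext u v
        rw [hsubJ, hX'app]
        simp [Matrix.add_apply, Matrix.sub_apply, Matrix.diagonal_apply]
        ring
      rw [heq]
      exact hXJ.add (PosSemidef.diagonal (fun u => hd0 u))
    -- the matrix D
    set D : Matrix V V ℝ := Matrix.of fun u v => (X' u v - 1) / (s * (s-1)) with hD
    have hDapp : ∀ u v, D u v = (X' u v - 1) / (s * (s-1)) := fun u v => rfl
    have hDsym : ∀ u v, D u v = D v u := by
      intro u v; rw [hDapp, hDapp, hX'sym]
    have hDpsd : D.PosSemidef := by
      refine psd_of_quad hDsym fun x => ?_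
      have h := quad_nonneg hX'J x
      have heq : ∑ u, ∑ v, x u * D u v * x v
          = (∑ u, ∑ v, x u * ((X' - Matrix.of fun _ _ => (1:ℝ)) : Matrix V V ℝ) u v * x v)
            / (s * (s-1)) := by
        rw [Finset.sum_div]
        refine Finset.sum_congr rfl fun u _ => ?_
        rw [Finset.sum_div]
        refine Finset.sum_congr rfl fun v _ => ?_
        rw [hDapp, hsubJ]
        ring
      rw [heq]
      exact div_nonneg h (by positivity)
    -- the lifted matrix Y
    refine ⟨Matrix.of fun p q => liftG t s p * liftG t s q + liftH t s D p q,
      ⟨?_, ?_⟩, ?_, ?_, ?_, ?_, ?_⟩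
    · -- PSD
      refine psd_of_quad ?_ fun x => ?_
      · intro p q
        rcases p with _ | pu <;> rcases q with _ | qv
        · rfl
        · simp
        · simp
        · simp only [Matrix.of_apply, liftH_some_some]
          rcases eq_or_ne pu.2 qv.2 with h | h
          · rw [hDsym pu.1 qv.1, if_pos h, if_pos h.symm,
              mul_comm (liftG t s (some pu)) (liftG t s (some qv))]
          · rw [hDsym pu.1 qv.1, if_neg h, if_neg (fun hh => h hh.symm),
              mul_comm (liftG t s (some pu)) (liftG t s (some qv))]
      · have hsplit : ∑ p, ∑ q, x p * (Matrix.of fun p q =>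
            liftG t s p * liftG t s q + liftH t s D p q) p q * x q
            = (∑ p, ∑ q, (x p * liftG t s p) * (x q * liftG t s q))
              + ∑ p, ∑ q, x p * liftH t s D p q * x q := by
          rw [← Finset.sum_add_distrib]
          refine Finset.sum_congr rfl fun p _ => ?_
          rw [← Finset.sum_add_distrib]
          refine Finset.sum_congr rfl fun q _ => ?_
          simp only [Matrix.of_apply]
          ring
        rw [hsplit]
        have h1 : 0 ≤ ∑ p, ∑ q, (x p * liftG t s p) * (x q * liftG t s q) := by
          rw [← Finset.sum_mul_sum]
          exact mul_self_nonneg _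
        have h2 : 0 ≤ ∑ p, ∑ q, x p * liftH t s D p q * x q := by
          have hq := quadOpt (Matrix.of (liftH t s D)) x
          simp only [Matrix.of_apply, liftH_none_left, liftH_none_right, liftH_some_some,
            mul_zero, zero_mul, Finset.sum_const_zero, add_zero, zero_add] at hq
          rw [hq, quadH_eq s hs hs0 D x]
          refine Finset.sum_nonneg fun j _ => ?_
          exact quad_nonneg hDpsd (fun w => x (some (w,j)) - (∑ i, x (some (w,i)))/s)
        linarith
    · -- entrywise nonneg
      intro p q
      simp only [Matrix.of_apply]
      rcases p with _ | ⟨u, i⟩ <;> rcases q with _ | ⟨v, j⟩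
      · norm_num
      · simp; positivity
      · simp; positivity
      · simp only [liftG_some, liftH_some_some]
        by_cases h : i = j
        · have hval : 1/s * (1/s) + D u v * ((if (u, i).2 = (v, j).2 then (1:ℝ) else 0) - 1/s)
              = X' u v / (s * s) := by
            rw [hDapp]
            simp [h]
            field_simp
            ring
          rw [hval]
          exact div_nonneg (hX'nn u v) (by positivity)
        · have hval : 1/s * (1/s) + D u v * ((if (u, i).2 = (v, j).2 then (1:ℝ) else 0) - 1/s)
              = (s - X' u v) / (s * (s * (s - 1))) := by
            rw [hDapp]
            simp [h]
            field_simp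
            ring
          rw [hval]
          exact div_nonneg (by linarith [hX'le u v]) (by positivity)
    · -- (none, none) entry
      simp
    · -- border sums
      intro u
      simp only [Matrix.of_apply, liftG_none, liftG_some, liftH_none_left, one_mul, add_zero]
      rw [Finset.sum_const, Finset.card_univ, Fintype.card_fin, nsmul_eq_mul, ← hs]
      field_simp
    · -- block sums
      intro u
      have inner : ∀ i : Fin t, ∑ j : Fin t,
          ((1:ℝ)/s * (1/s) + D u u * ((if i = j then (1:ℝ) else 0) - 1/s)) = 1/s := by
        intro i
        rw [Finset.sum_add_distrib, Finset.sum_const, Finset.card_univ, Fintype.card_fin,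
          nsmul_eq_mul]
        have hsum2 : ∑ j : Fin t, D u u * ((if i = j then (1:ℝ) else 0) - 1/s)
            = D u u * (1 - (t:ℝ) * (1/s)) := by
          rw [← Finset.mul_sum]
          congr 1
          rw [Finset.sum_sub_distrib, Finset.sum_const, Finset.card_univ, Fintype.card_fin,
            nsmul_eq_mul]
          simp [Finset.sum_ite_eq]
        rw [hsum2, ← hs]
        field_simp
        ring
      calc ∑ i : Fin t, ∑ j : Fin t, (Matrix.of fun p q =>
            liftG t s p * liftG t s q + liftH t s D p q) (some (u, i)) (some (u, j))
          = ∑ i : Fin t, (1/s : ℝ) := by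
            refine Finset.sum_congr rfl fun i _ => ?_
            rw [← inner i]
            refine Finset.sum_congr rfl fun j _ => ?_
            simp only [Matrix.of_apply, liftG_some, liftH_some_some]
        _ = 1 := by
            rw [Finset.sum_const, Finset.card_univ, Fintype.card_fin, nsmul_eq_mul, ← hs]
            field_simp
    · -- edges
      intro i u v hadj
      simp only [Matrix.of_apply, liftG_some, liftH_some_some]
      rw [hDapp, hX'edge u v hadj]
      simp
      field_simp
      ring
    · -- off-diagonal in a block
      intro u i j hij
      simp only [Matrix.of_apply, liftG_some, liftH_some_some]
      rw [hDapp, hX'diag u]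
      simp [hij]
      field_simp
      ring


private lemma backward_dir {V : Type*} [Fintype V] [DecidableEq V]
    (G : SimpleGraph V) (t : ℕ) (ht : 1 ≤ t)
    (Y : Matrix (Option (V × Fin t)) (Option (V × Fin t)) ℝ)
    (hY : DoublyNonneg Y) (h00 : Y none none = 1)
    (hb : ∀ u : V, ∑ i : Fin t, Y none (some (u, i)) = 1)
    (hblk : ∀ u : V, ∑ i : Fin t, ∑ j : Fin t, Y (some (u, i)) (some (u, j)) = 1)
    (hedge : ∀ (i : Fin t) (u v : V), G.Adj u v → Y (some (u, i)) (some (v, i)) = 0)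
    (hoff : ∀ (u : V) (i j : Fin t), i ≠ j → Y (some (u, i)) (some (u, j)) = 0) :
    (∃ X : Matrix V V ℝ, DoublyNonneg X ∧ (∀ u, ⌈X u u⌉ = (t : ℤ)) ∧
        (∀ u v, G.Adj u v → X u v = 0) ∧
        (X - Matrix.of fun _ _ => (1 : ℝ)).PosSemidef) := by
  have hYsym : ∀ p q, Y p q = Y q p := fun p q =>
    ((star_trivial _).symm.trans (hY.1.1.apply q p))
  set s : ℝ := (t : ℝ) with hs
  have hs1 : (1:ℝ) ≤ s := by rw [hs]; exact_mod_cast ht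
  have hs0 : (0:ℝ) < s := by linarith
  set X : Matrix V V ℝ := Matrix.of fun u v => s * ∑ i, Y (some (u,i)) (some (v,i)) with hX
  have hXapp : ∀ u v, X u v = s * ∑ i, Y (some (u,i)) (some (v,i)) := fun u v => rfl
  have hXsym : ∀ u v, X u v = X v u := by
    intro u v
    rw [hXapp, hXapp]
    congr 1
    exact Finset.sum_congr rfl fun i _ => hYsym _ _
  have hdiagsum : ∀ u, ∑ i, Y (some (u,i)) (some (u,i)) = 1 := by
    intro u
    calc ∑ i, Y (some (u,i)) (some (u,i))
        = ∑ i, ∑ j, Y (some (u,i)) (some (u,j)) := by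
          refine Finset.sum_congr rfl fun i _ => ?_
          exact (Finset.sum_eq_single i (fun j _ hj => hoff u i j (Ne.symm hj))
            (by simp)).symm
      _ = 1 := hblk u
  have hdiag : ∀ u, X u u = s := by
    intro u; rw [hXapp, hdiagsum, mul_one]
  have hquadX : ∀ z : V → ℝ,
      ∑ u, ∑ v, z u * X u v * z v
        = s * ∑ i, ∑ u, ∑ v, z u * Y (some (u,i)) (some (v,i)) * z v := by
    intro z
    have h1 : ∀ u v : V, z u * X u v * z v
        = ∑ i, s * (z u * Y (some (u,i)) (some (v,i)) * z v) := by
      intro u v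
      rw [hXapp]
      simp only [Finset.mul_sum, Finset.sum_mul]
      exact Finset.sum_congr rfl fun i _ => by ring
    calc ∑ u, ∑ v, z u * X u v * z v
        = ∑ u, ∑ v, ∑ i, s * (z u * Y (some (u,i)) (some (v,i)) * z v) :=
          Finset.sum_congr rfl fun u _ => Finset.sum_congr rfl fun v _ => h1 u v
      _ = ∑ u, ∑ i, ∑ v, s * (z u * Y (some (u,i)) (some (v,i)) * z v) :=
          Finset.sum_congr rfl fun u _ => Finset.sum_comm
      _ = ∑ i, ∑ u, ∑ v, s * (z u * Y (some (u,i)) (some (v,i)) * z v) :=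
          Finset.sum_comm
      _ = s * ∑ i, ∑ u, ∑ v, z u * Y (some (u,i)) (some (v,i)) * z v := by
          simp only [Finset.mul_sum]
  have hQnonneg : ∀ (z : V → ℝ) (i : Fin t),
      0 ≤ ∑ u, ∑ v, z u * Y (some (u,i)) (some (v,i)) * z v := by
    intro z i
    have h := quad_nonneg hY.1
      (fun p => match p with | none => 0 | some pr => if pr.2 = i then z pr.1 else 0)
    rw [quadOpt] at h
    simpa [ite_mul, mul_ite, zero_mul, mul_zero, Finset.sum_ite_eq, Finset.sum_ite_eq'] using h
  have hXpsd : X.PosSemidef := by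
    refine psd_of_quad hXsym fun z => ?_
    rw [hquadX]
    exact mul_nonneg hs0.le (Finset.sum_nonneg fun i _ => hQnonneg z i)
  refine ⟨X, ⟨hXpsd, ?_⟩, ?_, ?_, ?_⟩
  · intro u v
    rw [hXapp]
    exact mul_nonneg hs0.le (Finset.sum_nonneg fun i _ => hY.2 _ _)
  · intro u
    rw [hdiag, hs]
    exact_mod_cast Int.ceil_natCast t
  · intro u v hadj
    rw [hXapp]
    have : ∀ i : Fin t, Y (some (u,i)) (some (v,i)) = 0 := fun i => hedge i u v hadj
    simp [this]
  · have hsub : ∀ u v, ((X - Matrix.of fun _ _ => (1:ℝ)) : Matrix V V ℝ) u v = X u v - 1 := by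
      intro u v; simp [Matrix.sub_apply]
    refine psd_of_quad (fun u v => by rw [hsub, hsub, hXsym u v]) fun z => ?_
    set σ : ℝ := ∑ u, z u with hσ
    have hsplit : ∑ u, ∑ v, z u * ((X - Matrix.of fun _ _ => (1:ℝ)) : Matrix V V ℝ) u v * z v
        = (∑ u, ∑ v, z u * X u v * z v) - σ * σ := by
      rw [hσ, Finset.sum_mul_sum, ← Finset.sum_sub_distrib]
      refine Finset.sum_congr rfl fun u _ => ?_
      rw [← Finset.sum_sub_distrib]
      refine Finset.sum_congr rfl fun v _ => ?_
      rw [hsub]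
      ring
    rw [hsplit]
    have hT : 0 ≤ ∑ i : Fin t, ((-σ) * Y none none * (-σ)
        + (∑ u, ∑ k, (-σ) * Y none (some (u,k)) * (if k = i then s * z u else 0))
        + (∑ u, ∑ k, (if k = i then s * z u else 0) * Y (some (u,k)) none * (-σ))
        + ∑ u, ∑ k, ∑ v, ∑ j, (if k = i then s * z u else 0) * Y (some (u,k)) (some (v,j))
            * (if j = i then s * z v else 0)) := by
      refine Finset.sum_nonneg fun i _ => ?_
      have h := quad_nonneg hY.1
        (fun p => match p with | none => -σ | some pr => if pr.2 = i then s * z pr.1 else 0)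
      rw [quadOpt] at h
      simpa using h
    simp only [Finset.sum_add_distrib] at hT
    have hG1 : ∑ _i : Fin t, (-σ) * Y none none * (-σ) = s * (σ * σ) := by
      rw [h00]
      simp [Finset.sum_const, Finset.card_univ, nsmul_eq_mul, hs]
    have hG2 : (∑ i : Fin t, ∑ u, ∑ k, (-σ) * Y none (some (u,k)) * (if k = i then s * z u else 0))
        = -(s * (σ * σ)) := by
      calc ∑ i : Fin t, ∑ u, ∑ k, (-σ) * Y none (some (u,k)) * (if k = i then s * z u else 0)
          = ∑ i : Fin t, ∑ u, (-σ) * Y none (some (u,i)) * (s * z u) := by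
            simp [mul_ite, mul_zero, Finset.sum_ite_eq']
        _ = ∑ u, ∑ i : Fin t, (-σ) * Y none (some (u,i)) * (s * z u) := Finset.sum_comm
        _ = ∑ u, (-(σ * s) * z u) * ∑ i : Fin t, Y none (some (u,i)) := by
            refine Finset.sum_congr rfl fun u _ => ?_
            rw [Finset.mul_sum]
            exact Finset.sum_congr rfl fun i _ => by ring
        _ = ∑ u, (-(σ * s) * z u) * 1 := by
            exact Finset.sum_congr rfl fun u _ => by rw [hb u]
        _ = -(σ * s) * ∑ u, z u := by
            rw [Finset.mul_sum]
            exact Finset.sum_congr rfl fun u _ => by ring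
        _ = -(s * (σ * σ)) := by rw [← hσ]; ring
    have hG3 : (∑ i : Fin t, ∑ u, ∑ k, (if k = i then s * z u else 0) * Y (some (u,k)) none * (-σ))
        = -(s * (σ * σ)) := by
      calc ∑ i : Fin t, ∑ u, ∑ k, (if k = i then s * z u else 0) * Y (some (u,k)) none * (-σ)
          = ∑ i : Fin t, ∑ u, (s * z u) * Y (some (u,i)) none * (-σ) := by
            simp [ite_mul, zero_mul, Finset.sum_ite_eq']
        _ = ∑ u, ∑ i : Fin t, (s * z u) * Y none (some (u,i)) * (-σ) := by
            rw [Finset.sum_comm]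
            exact Finset.sum_congr rfl fun u _ => Finset.sum_congr rfl fun i _ => by
              rw [hYsym]
        _ = ∑ u, (-(σ * s) * z u) * ∑ i : Fin t, Y none (some (u,i)) := by
            refine Finset.sum_congr rfl fun u _ => ?_
            rw [Finset.mul_sum]
            exact Finset.sum_congr rfl fun i _ => by ring
        _ = ∑ u, (-(σ * s) * z u) * 1 := by
            exact Finset.sum_congr rfl fun u _ => by rw [hb u]
        _ = -(σ * s) * ∑ u, z u := by
            rw [Finset.mul_sum]
            exact Finset.sum_congr rfl fun u _ => by ring
        _ = -(s * (σ * σ)) := by rw [← hσ]; ring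
    have hG4 : (∑ i : Fin t, ∑ u, ∑ k, ∑ v, ∑ j, (if k = i then s * z u else 0)
          * Y (some (u,k)) (some (v,j)) * (if j = i then s * z v else 0))
        = s * ∑ u, ∑ v, z u * X u v * z v := by
      calc ∑ i : Fin t, ∑ u, ∑ k, ∑ v, ∑ j, (if k = i then s * z u else 0)
            * Y (some (u,k)) (some (v,j)) * (if j = i then s * z v else 0)
          = ∑ i : Fin t, ∑ u, ∑ v, (s * z u) * Y (some (u,i)) (some (v,i)) * (s * z v) := by
            refine Finset.sum_congr rfl fun i _ => ?_
            simp [ite_mul, mul_ite, zero_mul, mul_zero, Finset.sum_ite_eq, Finset.sum_ite_eq']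
        _ = ∑ i : Fin t, (s * s) * ∑ u, ∑ v, z u * Y (some (u,i)) (some (v,i)) * z v := by
            refine Finset.sum_congr rfl fun i _ => ?_
            simp only [Finset.mul_sum]
            refine Finset.sum_congr rfl fun u _ => Finset.sum_congr rfl fun v _ => by ring
        _ = (s * s) * ∑ i : Fin t, ∑ u, ∑ v, z u * Y (some (u,i)) (some (v,i)) * z v := by
            simp only [Finset.mul_sum]
        _ = s * ∑ u, ∑ v, z u * X u v * z v := by rw [hquadX z]; ring
    rw [hG1, hG2, hG3, hG4] at hT
    nlinarith [hT, hs0]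


/-- Equivalence, over the doubly nonnegative cone, between the small program defining
`⌈ϑ⁺(Ḡ)⌉ ≤ t` and the lifted program on indices `{0} ∪ V(G)×[t]`. -/
theorem dnn_chromatic_program_equiv {V : Type*} [Fintype V] [DecidableEq V]
    (G : SimpleGraph V) (t : ℕ) (ht : 1 ≤ t) :
    (∃ X : Matrix V V ℝ, DoublyNonneg X ∧ (∀ u, ⌈X u u⌉ = (t : ℤ)) ∧
        (∀ u v, G.Adj u v → X u v = 0) ∧
        (X - Matrix.of fun _ _ => (1 : ℝ)).PosSemidef) ↔
    (∃ X : Matrix (Option (V × Fin t)) (Option (V × Fin t)) ℝ, DoublyNonneg X ∧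
        X none none = 1 ∧
        (∀ u : V, ∑ i : Fin t, X none (some (u, i)) = 1) ∧
        (∀ u : V, ∑ i : Fin t, ∑ j : Fin t, X (some (u, i)) (some (u, j)) = 1) ∧
        (∀ (i : Fin t) (u v : V), G.Adj u v → X (some (u, i)) (some (v, i)) = 0) ∧
        (∀ (u : V) (i j : Fin t), i ≠ j → X (some (u, i)) (some (u, j)) = 0)) := by
  constructor
  · rintro ⟨X, hX, hceil, hedge, hXJ⟩
    exact forward_dir G t ht X hX hceil hedge hXJ
  · rintro ⟨Y, hY, h00, hb, hblk, hedge, hoff⟩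
    exact backward_dir G t ht Y hY h00 hb hblk hedge hoff
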